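/- Let T ⊆ B(H) be a weakly closed subspace, Ω ∈ H a unit vector with T'Ω dense in H (where T' is the commutant-type set of operators commuting with everything in T, or simply any set with this density property), and for each g in a group G let W_g be a linear isometry of H with W_g W_h = W_{gh} and with K_a := closure{W_g aΩ : g ∈ G} compact for every a ∈ T. Then the set Γ of linear contractions Θ : T → T with Θ(a)Ω ∈ K_a for all a ∈ T, topologized by pointwise strong convergence, is compact. -/

import Mathlib

noncomputable section

local notation "⟪" x ", " y "⟫" => @inner ℂ _ _ x y

/- STATEMENT 18: Let T ⊆ B(H) be a weakly closed subspace, Ω a unit vector with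
T'Ω dense in H, and (W_g) a G-indexed family of linear isometries of H with
W_g W_h = W_{gh} and compact orbit closures K_a = closure{W_g aΩ : g ∈ G} for all
a ∈ T.  Then the set Γ of linear contractions Θ : T → T with Θ(a)Ω ∈ K_a, in the
topology of pointwise strong convergence (here realized by identifying Θ with the
function (a, x) ↦ Θ(a)x in the product topology), is compact. -/
theorem contraction_semigroup_compact
    {H : Type*} [NormedAddCommGroup H] [InnerProductSpace ℂ H] [CompleteSpace H]
    {G : Type*} [Group G]
    (T : Submodule ℂ (H →L[ℂ] H))
    (hTw : IsClosed ((ContinuousLinearMapWOT.ofCLM : (H →L[ℂ] H) → (H →WOT[ℂ] H)) '' (T : Set (H →L[ℂ] H))))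
    (Ω : H) (hΩ : ‖Ω‖ = 1)
    (hdense : Dense ((fun b : H →L[ℂ] H => b Ω) ''
      Set.centralizer (T : Set (H →L[ℂ] H))))
    (W : G → (H →ₗᵢ[ℂ] H)) (hW : ∀ g h : G, (W g).comp (W h) = W (g * h))
    (hK : ∀ a : T, IsCompact
      (closure (Set.range fun g => W g ((a : H →L[ℂ] H) Ω)))) :
    IsCompact {F : T × H → H | ∃ Θ : T →ₗ[ℂ] T,
      (∀ a : T, ‖Θ a‖ ≤ ‖a‖) ∧
      (∀ a : T, ((Θ a : H →L[ℂ] H) Ω) ∈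
        closure (Set.range fun g => W g ((a : H →L[ℂ] H) Ω))) ∧
      (∀ (a : T) (x : H), F (a, x) = (Θ a : H →L[ℂ] H) x)} := by
  classical
  set K : T → Set H := fun a => closure (Set.range fun g => W g ((a : H →L[ℂ] H) Ω)) with hKdef
  set 𝒮 : Set (T × H → H) := {F : T × H → H | ∃ Θ : T →ₗ[ℂ] T,
      (∀ a : T, ‖Θ a‖ ≤ ‖a‖) ∧
      (∀ a : T, ((Θ a : H →L[ℂ] H) Ω) ∈ K a) ∧
      (∀ (a : T) (x : H), F (a, x) = (Θ a : H →L[ℂ] H) x)} with h𝒮def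
  -- key commutation fact
  have hcent : ∀ b ∈ Set.centralizer (T : Set (H →L[ℂ] H)), ∀ S : H →L[ℂ] H, S ∈ T →
      S (b Ω) = b (S Ω) := by
    intro b hb S hS
    have := hb S hS
    calc S (b Ω) = (S * b) Ω := rfl
    _ = (b * S) Ω := by rw [this]
    _ = b (S Ω) := rfl
  -- the compact target sets
  set C : T × H → Set H := fun p =>
    ⋂ b ∈ Set.centralizer (T : Set (H →L[ℂ] H)),
      Metric.cthickening (‖p.1‖ * ‖p.2 - b Ω‖) ((b : H →L[ℂ] H) '' K p.1) with hCdef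
  have hCcomp : ∀ p, IsCompact (C p) := by
    intro p
    apply TotallyBounded.isCompact_of_isClosed
    · rw [Metric.totallyBounded_iff]
      intro ε hε
      -- choose b with ‖p.2 - b Ω‖ small
      obtain ⟨y, hy, hyd⟩ := hdense.exists_dist_lt p.2
        (show (0:ℝ) < ε / (4 * (‖p.1‖ + 1)) by positivity)
      obtain ⟨b, hb, rfl⟩ := hy
      have hKb : IsCompact ((b : H →L[ℂ] H) '' K p.1) := (hK p.1).image b.continuous
      obtain ⟨t, _, htfin, htcov⟩ := hKb.finite_cover_balls (show (0:ℝ) < ε/4 by positivity)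
      refine ⟨t, htfin, ?_⟩
      have hr : ‖p.1‖ * ‖p.2 - b Ω‖ < ε / 2 := by
        have h1 : ‖p.2 - b Ω‖ < ε / (4 * (‖p.1‖ + 1)) := by
          rw [← dist_eq_norm]; exact hyd
        have h2 : ‖p.1‖ * ‖p.2 - b Ω‖ ≤ (‖p.1‖ + 1) * ‖p.2 - b Ω‖ := by
          apply mul_le_mul_of_nonneg_right (by linarith [norm_nonneg p.1]) (norm_nonneg _)
        have h3 : (‖p.1‖ + 1) * ‖p.2 - b Ω‖ < (‖p.1‖ + 1) * (ε / (4 * (‖p.1‖ + 1))) := by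
          apply mul_lt_mul_of_pos_left h1 (by positivity)
        have h4 : (‖p.1‖ + 1) * (ε / (4 * (‖p.1‖ + 1))) = ε / 4 := by
          field_simp
        linarith
      intro y hy
      have hy1 : y ∈ Metric.cthickening (‖p.1‖ * ‖p.2 - b Ω‖) ((b : H →L[ℂ] H) '' K p.1) := by
        have := Set.mem_iInter₂.mp hy b hb
        exact this
      have hy2 : y ∈ Metric.thickening (3 * ε / 4) ((b : H →L[ℂ] H) '' K p.1) :=
        Metric.cthickening_subset_thickening' (by positivity) (by linarith) _ hy1
      obtain ⟨z, hz, hzd⟩ := Metric.mem_thickening_iff.mp hy2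
      obtain ⟨c, hct, hcz⟩ := Set.mem_iUnion₂.mp (htcov hz)
      refine Set.mem_iUnion₂.mpr ⟨c, hct, ?_⟩
      rw [Metric.mem_ball] at *
      calc dist y c ≤ dist y z + dist z c := dist_triangle _ _ _
      _ < 3 * ε / 4 + ε / 4 := add_lt_add hzd hcz
      _ = ε := by ring
    · exact isClosed_biInter fun b _ => Metric.isClosed_cthickening
  -- 𝒮 is contained in the product of the compact sets
  have hsub : 𝒮 ⊆ Set.univ.pi C := by
    rintro F ⟨Θ, hΘn, hΘK, hΘF⟩ p _
    apply Set.mem_iInter₂.mpr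
    intro b hb
    refine Metric.mem_cthickening_of_dist_le _ ((b : H →L[ℂ] H) ((Θ p.1 : H →L[ℂ] H) Ω)) _ _
      ⟨_, hΘK p.1, rfl⟩ ?_
    rw [dist_eq_norm, hΘF p.1 p.2, ← hcent b hb _ (Θ p.1).2, ← map_sub]
    calc ‖(Θ p.1 : H →L[ℂ] H) (p.2 - b Ω)‖ ≤ ‖(Θ p.1 : H →L[ℂ] H)‖ * ‖p.2 - b Ω‖ :=
      (Θ p.1 : H →L[ℂ] H).le_opNorm _
    _ ≤ ‖p.1‖ * ‖p.2 - b Ω‖ := mul_le_mul_of_nonneg_right (hΘn p.1) (norm_nonneg _)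
  -- 𝒮 is closed
  have hclosed : IsClosed 𝒮 := by
    refine isClosed_of_closure_subset ?_
    intro F hF
    have key : ∀ s : Set (T × H → H), IsClosed s → 𝒮 ⊆ s → F ∈ s :=
      fun s hs hsub' => closure_minimal hsub' hs hF
    have h1 : ∀ (a : T) (x y : H), F (a, x + y) = F (a, x) + F (a, y) := by
      intro a x y
      refine key {G | G (a, x + y) = G (a, x) + G (a, y)}
        (isClosed_eq (continuous_apply _) ((continuous_apply (a,x)).add (continuous_apply (a,y)))) ?_
      rintro G ⟨Θ, _, _, hΘF⟩
      simp only [Set.mem_setOf_eq, hΘF, map_add]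
    have h2 : ∀ (a : T) (c : ℂ) (x : H), F (a, c • x) = c • F (a, x) := by
      intro a c x
      refine key {G | G (a, c • x) = c • G (a, x)}
        (isClosed_eq (continuous_apply _) ((continuous_apply _).const_smul c)) ?_
      rintro G ⟨Θ, _, _, hΘF⟩
      simp only [Set.mem_setOf_eq, hΘF, map_smul]
    have h3 : ∀ (a a' : T) (x : H), F (a + a', x) = F (a, x) + F (a', x) := by
      intro a a' x
      refine key {G | G (a + a', x) = G (a, x) + G (a', x)}
        (isClosed_eq (continuous_apply _) ((continuous_apply (a,x)).add (continuous_apply (a',x)))) ?_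
      rintro G ⟨Θ, _, _, hΘF⟩
      simp only [Set.mem_setOf_eq, hΘF, map_add]
      rfl
    have h4 : ∀ (c : ℂ) (a : T) (x : H), F (c • a, x) = c • F (a, x) := by
      intro c a x
      refine key {G | G (c • a, x) = c • G (a, x)}
        (isClosed_eq (continuous_apply _) ((continuous_apply _).const_smul c)) ?_
      rintro G ⟨Θ, _, _, hΘF⟩
      simp only [Set.mem_setOf_eq, hΘF, map_smul]
      rfl
    have h5 : ∀ (a : T) (x : H), ‖F (a, x)‖ ≤ ‖a‖ * ‖x‖ := by
      intro a x
      refine key {G | ‖G (a, x)‖ ≤ ‖a‖ * ‖x‖}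
        (isClosed_le (continuous_apply _).norm continuous_const) ?_
      rintro G ⟨Θ, hΘn, _, hΘF⟩
      simp only [Set.mem_setOf_eq, hΘF]
      calc ‖(Θ a : H →L[ℂ] H) x‖ ≤ ‖(Θ a : H →L[ℂ] H)‖ * ‖x‖ := (Θ a : H →L[ℂ] H).le_opNorm _
      _ ≤ ‖a‖ * ‖x‖ := mul_le_mul_of_nonneg_right (hΘn a) (norm_nonneg _)
    have h6 : ∀ a : T, F (a, Ω) ∈ K a := by
      intro a
      refine key {G | G (a, Ω) ∈ K a} (isClosed_closure.preimage (continuous_apply _)) ?_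
      rintro G ⟨Θ, _, hΘK, hΘF⟩
      simp only [Set.mem_setOf_eq, hΘF]
      exact hΘK a
    -- the operator associated to each a
    set Sop : T → (H →L[ℂ] H) := fun a => LinearMap.mkContinuous
      { toFun := fun x => F (a, x)
        map_add' := h1 a
        map_smul' := h2 a } ‖a‖ (h5 a) with hSopdef
    have hSopapp : ∀ (a : T) (x : H), Sop a x = F (a, x) := fun a x => rfl
    have hSopT : ∀ a : T, Sop a ∈ T := by
      intro a
      have hcl : ClusterPt F (Filter.principal 𝒮) := mem_closure_iff_clusterPt.mp hF
      haveI : (nhds F ⊓ Filter.principal 𝒮).NeBot := hcl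
      set m : (T × H → H) → (H →L[ℂ] H) := fun G =>
        if h : G ∈ 𝒮 then ((h.choose a : T) : H →L[ℂ] H) else 0 with hmdef
      have hm : ∀ G (hG : G ∈ 𝒮), ∀ x, m G x = G (a, x) := by
        intro G hG x
        rw [hmdef]
        simp only [dif_pos hG]
        exact (hG.choose_spec.2.2 a x).symm
      have hmT : ∀ G (hG : G ∈ 𝒮), m G ∈ T := by
        intro G hG
        rw [hmdef]
        simp only [dif_pos hG]
        exact (hG.choose a).2
      have hev : ∀ᶠ G in nhds F ⊓ Filter.principal 𝒮, G ∈ 𝒮 :=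
        Filter.Eventually.filter_mono inf_le_right (Filter.eventually_principal.mpr fun _ h => h)
      have htend : Filter.Tendsto (fun G => (ContinuousLinearMapWOT.ofCLM : (H →L[ℂ] H) → (H →WOT[ℂ] H)) (m G))
          (nhds F ⊓ Filter.principal 𝒮) (nhds ((ContinuousLinearMapWOT.ofCLM : (H →L[ℂ] H) → (H →WOT[ℂ] H)) (Sop a))) := by
        rw [ContinuousLinearMapWOT.tendsto_iff_forall_inner_apply_tendsto]
        intro x y
        have hbase : Filter.Tendsto (fun G : T × H → H => ⟪y, G (a, x)⟫)
            (nhds F ⊓ Filter.principal 𝒮) (nhds ⟪y, F (a, x)⟫) :=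
          ((Continuous.inner continuous_const (continuous_apply (a, x))).tendsto F).mono_left
            inf_le_left
        refine Filter.Tendsto.congr' ?_ hbase
        filter_upwards [hev] with G hG
        rw [ContinuousLinearMapWOT.ofCLM_apply, hm G hG]
      have hmem : (ContinuousLinearMapWOT.ofCLM : (H →L[ℂ] H) → (H →WOT[ℂ] H)) (Sop a) ∈
          closure ((ContinuousLinearMapWOT.ofCLM : (H →L[ℂ] H) → (H →WOT[ℂ] H)) '' (T : Set (H →L[ℂ] H))) := by
        refine mem_closure_of_tendsto htend ?_
        filter_upwards [hev] with G hG
        exact ⟨m G, hmT G hG, rfl⟩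
      rw [hTw.closure_eq] at hmem
      obtain ⟨S', hS'T, hS'eq⟩ := hmem
      have : S' = Sop a := ContinuousLinearMapWOT.ofCLM_injective hS'eq
      rwa [← this]
    refine ⟨{ toFun := fun a => ⟨Sop a, hSopT a⟩
              map_add' := ?_
              map_smul' := ?_ }, ?_, ?_, ?_⟩
    · intro a a'
      apply Subtype.ext
      apply ContinuousLinearMap.ext
      intro x
      exact h3 a a' x
    · intro c a
      apply Subtype.ext
      apply ContinuousLinearMap.ext
      intro x
      exact h4 c a x
    · intro a
      exact LinearMap.mkContinuous_norm_le _ (norm_nonneg a) (h5 a)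
    · intro a
      exact h6 a
    · intro a x
      rfl
  exact (isCompact_univ_pi hCcomp).of_isClosed_subset hclosed hsub
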